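/- For all x, y ∈ ℂ with xy ≠ 0, the 2 × 5 complex matrix whose first row is (−1, 1/y, 1 + y/x², 1/x², −2x/y + y²/x² + 1/(x²y)) and whose second row is (−1/y², −x/y² − 1, −1/x, 1, x²/y² − 2y/x + 1/(xy²)) has rank 2; equivalently, some 2 × 2 minor of this matrix is nonzero. -/

import Mathlib

/-- If a 2×5 matrix has a 2×2 column-submatrix with nonzero determinant,
then its rank is 2. -/
lemma rank_eq_two_of_minor (M : Matrix (Fin 2) (Fin 5) ℂ) (i j : Fin 5)
    (hdet : (Matrix.of ![![M 0 i, M 0 j], ![M 1 i, M 1 j]]).det ≠ 0) :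
    M.rank = 2 := by
  classical
  refine le_antisymm ?_ ?_
  · simpa using M.rank_le_card_height
  · set P : Matrix (Fin 5) (Fin 2) ℂ := fun a b => if a = ![i, j] b then 1 else 0 with hP
    have key : ∀ a b, (M * P) a b = M a (![i, j] b) := by
      intro a b
      simp only [hP, Matrix.mul_apply, mul_ite, mul_one, mul_zero]
      show ∑ c, M a c * (if c = ![i, j] b then (1 : ℂ) else 0) = M a (![i, j] b)
      simp
    have hMP : M * P = Matrix.of ![![M 0 i, M 0 j], ![M 1 i, M 1 j]] := by
      ext a b
      rw [key]
      fin_cases a <;> fin_cases b <;> rfl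
    have h1 : (M * P).rank = 2 := by
      rw [hMP, Matrix.rank_of_isUnit _
        ((Matrix.isUnit_iff_isUnit_det _).mpr (isUnit_iff_ne_zero.mpr hdet))]
      simp
    have h2 := Matrix.rank_mul_le_left M P
    omega

theorem jacobian_rank_two (x y : ℂ) (hxy : x * y ≠ 0) :
    (Matrix.of
      ![![-1, 1 / y, 1 + y / x ^ 2, 1 / x ^ 2,
          -2 * x / y + y ^ 2 / x ^ 2 + 1 / (x ^ 2 * y)],
        ![-1 / y ^ 2, -x / y ^ 2 - 1, -1 / x, 1,
          x ^ 2 / y ^ 2 - 2 * y / x + 1 / (x * y ^ 2)]] :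
        Matrix (Fin 2) (Fin 5) ℂ).rank = 2 := by
  have hx : x ≠ 0 := fun h => hxy (by simp [h])
  have hy : y ≠ 0 := fun h => hxy (by simp [h])
  set M : Matrix (Fin 2) (Fin 5) ℂ := Matrix.of
      ![![-1, 1 / y, 1 + y / x ^ 2, 1 / x ^ 2,
          -2 * x / y + y ^ 2 / x ^ 2 + 1 / (x ^ 2 * y)],
        ![-1 / y ^ 2, -x / y ^ 2 - 1, -1 / x, 1,
          x ^ 2 / y ^ 2 - 2 * y / x + 1 / (x * y ^ 2)]] with hM
  -- the four relevant minors (columns (0,3), (0,1), (2,3), (1,2))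
  by_cases h03 : x ^ 2 * y ^ 2 - 1 ≠ 0
  · refine rank_eq_two_of_minor M 0 3 ?_
    rw [Matrix.det_fin_two]
    simp only [hM, Matrix.of_apply]
    show (-1 : ℂ) * 1 - 1 / x ^ 2 * (-1 / y ^ 2) ≠ 0
    intro h
    apply h03
    field_simp at h
    linear_combination -h
  by_cases h01 : x * y + y ^ 3 + 1 ≠ 0
  · refine rank_eq_two_of_minor M 0 1 ?_
    rw [Matrix.det_fin_two]
    simp only [hM, Matrix.of_apply]
    show (-1 : ℂ) * (-x / y ^ 2 - 1) - 1 / y * (-1 / y ^ 2) ≠ 0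
    intro h
    field_simp at h
    have h' : y ^ 2 * (x * y + y ^ 3 + 1) = 0 := by linear_combination y ^ 2 * h
    rcases mul_eq_zero.mp h' with h'' | h''
    · exact pow_ne_zero 2 hy h''
    · exact h01 h''
  by_cases h23 : x ^ 3 + x * y + 1 ≠ 0
  · refine rank_eq_two_of_minor M 2 3 ?_
    rw [Matrix.det_fin_two]
    simp only [hM, Matrix.of_apply]
    show ((1 : ℂ) + y / x ^ 2) * 1 - 1 / x ^ 2 * (-1 / x) ≠ 0
    intro h
    field_simp at h
    have h' : x ^ 2 * (x ^ 3 + x * y + 1) = 0 := by linear_combination x ^ 2 * h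
    rcases mul_eq_zero.mp h' with h'' | h''
    · exact pow_ne_zero 2 hx h''
    · exact h23 h''
  by_cases h12 : x ^ 3 + x ^ 2 * y ^ 2 + y ^ 3 ≠ 0
  · refine rank_eq_two_of_minor M 1 2 ?_
    rw [Matrix.det_fin_two]
    simp only [hM, Matrix.of_apply]
    show (1 : ℂ) / y * (-1 / x) - (1 + y / x ^ 2) * (-x / y ^ 2 - 1) ≠ 0
    intro h
    field_simp at h
    have h' : (x * y) * (x ^ 3 + x ^ 2 * y ^ 2 + y ^ 3) = 0 := by linear_combination (x * y) * h
    rcases mul_eq_zero.mp h' with h'' | h''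
    · exact hxy h''
    · exact h12 h''
  -- all four minors vanish: contradiction
  exfalso
  push_neg at h03 h01 h23 h12
  have hxy2 : x * y = -(1 / 2) := by linear_combination (h01 + h23 - h12 + h03) / 2
  have : (x * y) ^ 2 = 1 := by linear_combination h03
  rw [hxy2] at this
  norm_num at this
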